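/- Let q ≡ 1 (mod 3) be a prime power. An element π of AGL(1,q) is an isolated vertex of the contraction graph of AGL(1,q) if and only if π(F) = F, and there are exactly q − 1 such elements. -/

import Mathlib

/-- The set of affine permutations `x ↦ a x + b`, `a ≠ 0`, of the field `K`. -/
def AGL (K : Type*) [Field K] : Set (Equiv.Perm K) :=
  {π | ∃ a b : K, a ≠ 0 ∧ ∀ x, π x = a * x + b}

/-- Adjacency in the contraction graph of `AGL(1,q)` with distinguished element `F`. -/
def AGLAdj {K : Type*} [Field K] (F : K) (π σ : Equiv.Perm K) : Prop :=
  π ∈ AGL K ∧ σ ∈ AGL K ∧ π F ≠ F ∧ σ F ≠ F ∧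
    σ (π⁻¹ F) = π F ∧ π (σ⁻¹ F) = σ F

/-- The affine permutation `x ↦ a x + b` for `a ≠ 0`. -/
def affPerm {K : Type*} [Field K] (a b : K) (ha : a ≠ 0) : Equiv.Perm K where
  toFun x := a * x + b
  invFun y := (y - b) / a
  left_inv x := by field_simp; ring
  right_inv y := by field_simp; ring

theorem stmt7 {K : Type*} [Field K] [Fintype K] (q : ℕ) (hq : Fintype.card K = q)
    (hq3 : q % 3 = 1) (F : K) :
    (∀ π ∈ AGL K, ((∀ σ : Equiv.Perm K, ¬ AGLAdj F π σ) ↔ π F = F)) ∧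
      Set.ncard {π : Equiv.Perm K | π ∈ AGL K ∧ π F = F} = q - 1 := by
  classical
  -- get a primitive cube root of unity
  haveI : Fact (Nat.Prime 3) := ⟨by norm_num⟩
  have h3 : (3 : ℕ) ∣ Fintype.card Kˣ := by
    rw [Fintype.card_units, hq]; omega
  obtain ⟨ζ, hζ⟩ := exists_prime_orderOf_dvd_card (G := Kˣ) 3 h3
  set ω : K := (ζ : K) with hωdef
  have hω3 : ω ^ 3 = 1 := by
    have : ζ ^ 3 = 1 := by rw [← hζ]; exact pow_orderOf_eq_one ζ
    have := congrArg (Units.val) this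
    simpa [hωdef] using this
  have hω1 : ω ≠ 1 := by
    intro h
    have : ζ = 1 := Units.ext (by simpa [hωdef] using h)
    rw [this] at hζ; simp at hζ
  have hω : ω ^ 2 + ω + 1 = 0 := by
    have hmul : (ω - 1) * (ω ^ 2 + ω + 1) = 0 := by linear_combination hω3
    rcases mul_eq_zero.1 hmul with h | h
    · exact absurd (sub_eq_zero.1 h) hω1
    · exact h
  have hω0 : ω ≠ 0 := by
    intro h; rw [h] at hω3; simp at hω3
  constructor
  · intro π hπ
    constructor
    · intro h
      by_contra hF
      obtain ⟨a, b, ha, hab⟩ := hπ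
      have hF' : a * F + b ≠ F := by rw [← hab F]; exact hF
      have hc : a * ω ≠ 0 := mul_ne_zero ha hω0
      set p : K := (F - b) / a with hpdef
      set c : K := a * ω with hcdef
      set d : K := (a * F + b) - c * p with hddef
      have hπp : π p = F := by rw [hab, hpdef]; field_simp; ring
      have hinv : π⁻¹ F = p := by rw [← hπp]; simp
      set σ : Equiv.Perm K := affPerm c d hc with hσdef
      have hσapp : ∀ x, σ x = c * x + d := fun x => rfl
      have hσinv : σ⁻¹ F = (F - d) / c := rfl
      refine h σ ⟨⟨a, b, ha, hab⟩, ⟨c, d, hc, hσapp⟩, hF, ?_, ?_, ?_⟩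
      · -- σ F ≠ F
        rw [hσapp]
        intro heq
        have key : (ω + 1) * (a * F + b - F) = 0 := by
          rw [hddef, hcdef, hpdef] at heq
          field_simp at heq
          have key' : a * ((ω + 1) * (a * F + b - F)) = 0 := by linear_combination a * heq
          rcases mul_eq_zero.1 key' with h' | h'
          · exact absurd h' ha
          · exact h'
        rcases mul_eq_zero.1 key with h1 | h1
        · have : (1 : K) = 0 := by linear_combination hω - ω * h1
          simp at this
        · exact hF' (by linear_combination h1)
      · -- σ (π⁻¹ F) = π F
        rw [hinv, hσapp, hab, hddef]; ring
      · -- π (σ⁻¹ F) = σ F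
        rw [hσinv, hσapp, hab]
        rw [hddef, hcdef, hpdef]
        field_simp
        ring_nf
        linear_combination (F - F*a - b) * hω
    · intro hfix σ hadj
      exact hadj.2.2.1 hfix
  · -- counting
    have e : {π : Equiv.Perm K | π ∈ AGL K ∧ π F = F} ≃ {a : K // a ≠ 0} := by
      refine
        { toFun := fun π => ⟨π.1 (F + 1) - F, ?_⟩
          invFun := fun a => ⟨affPerm a.1 (F - a.1 * F) a.2, ⟨a.1, F - a.1 * F, a.2, fun x => rfl⟩, by
            show a.1 * F + (F - a.1 * F) = F; ring⟩
          left_inv := ?_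
          right_inv := ?_ }
      · intro h0
        obtain ⟨⟨a, b, ha, hab⟩, hfix⟩ := π.2
        rw [hab] at h0 hfix
        exact ha (by linear_combination h0 - hfix)
      · rintro ⟨π, hmem, hfix⟩
        obtain ⟨a, b, ha, hab⟩ := hmem
        rw [hab] at hfix
        apply Subtype.ext
        apply Equiv.ext
        intro x
        show (π (F + 1) - F) * x + (F - (π (F + 1) - F) * F) = π x
        rw [hab, hab]
        linear_combination (x - 1 - F) * hfix
      · rintro ⟨a, ha⟩
        ext
        show (affPerm a (F - a * F) ha) (F + 1) - F = a
        show a * (F + 1) + (F - a * F) - F = a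
        ring
    calc Set.ncard {π : Equiv.Perm K | π ∈ AGL K ∧ π F = F}
        = Nat.card {π : Equiv.Perm K | π ∈ AGL K ∧ π F = F} := (Nat.card_coe_set_eq _).symm
      _ = Nat.card {a : K // a ≠ 0} := Nat.card_congr e
      _ = Nat.card Kˣ := (Nat.card_congr (unitsEquivNeZero (G₀ := K))).symm
      _ = q - 1 := by rw [Nat.card_eq_fintype_card, Fintype.card_units, hq]
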